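/- Let β' ≥ β > 1 and for r ≥ 0 set I(r) = ∫_0^∞ dx / ((1+(rx)^β)(1+x^{β'})). Then for every r ≥ 1, |I(r) - (log r)/r| ≤ 4/r + (β-1)·(log r)²/(2r). -/

import Mathlib

open Real Set MeasureTheory

section Aux

lemma Istmt6_f_contOn (β β' r : ℝ) (hβ : 0 ≤ β) (hβ' : 0 ≤ β') (hr : 0 < r) :
    ContinuousOn (fun x : ℝ => 1 / ((1 + (r * x) ^ β) * (1 + x ^ β'))) (Ioi 0) := by
  have h1 : Continuous fun x : ℝ => (1 + (r * x) ^ β) * (1 + x ^ β') :=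
    (continuous_const.add ((continuous_const.mul continuous_id).rpow_const
      fun x => Or.inr hβ)).mul
      (continuous_const.add (continuous_id.rpow_const fun x => Or.inr hβ'))
  apply ContinuousOn.div continuousOn_const h1.continuousOn
  intro x hx
  have hx0 : (0:ℝ) < x := hx
  have h2 : 0 ≤ (r * x) ^ β := rpow_nonneg (by positivity) _
  have h3 : 0 ≤ x ^ β' := rpow_nonneg hx0.le _
  positivity

lemma Istmt6_f_meas (β β' r : ℝ) :
    Measurable (fun x : ℝ => 1 / ((1 + (r * x) ^ β) * (1 + x ^ β'))) := by
  apply Measurable.div measurable_const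
  exact (measurable_const.add ((measurable_const.mul measurable_id).pow measurable_const)).mul
    (measurable_const.add (measurable_id.pow measurable_const))

lemma Istmt6_f_nonneg (β β' r : ℝ) (hr : 0 < r) {x : ℝ} (hx : 0 < x) :
    0 ≤ 1 / ((1 + (r * x) ^ β) * (1 + x ^ β')) := by
  have h2 : 0 ≤ (r * x) ^ β := rpow_nonneg (by positivity) _
  have h3 : 0 ≤ x ^ β' := rpow_nonneg hx.le _
  positivity

lemma Istmt6_f_le_one (β β' r : ℝ) (hr : 0 < r) {x : ℝ} (hx : 0 < x) :
    1 / ((1 + (r * x) ^ β) * (1 + x ^ β')) ≤ 1 := by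
  have h2 : 0 ≤ (r * x) ^ β := rpow_nonneg (by positivity) _
  have h3 : 0 ≤ x ^ β' := rpow_nonneg hx.le _
  rw [div_le_one (by positivity)]
  nlinarith

lemma Istmt6_f_tail (β β' r : ℝ) (hβ : 1 < β) (hββ' : β ≤ β') (hr : 1 ≤ r) {x : ℝ}
    (hx : 1 ≤ x) :
    1 / ((1 + (r * x) ^ β) * (1 + x ^ β')) ≤ r⁻¹ * x ^ (-2 : ℝ) := by
  have hx0 : (0:ℝ) < x := lt_of_lt_of_le one_pos hx
  have hr0 : (0:ℝ) < r := lt_of_lt_of_le one_pos hr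
  have h1 : r * x ^ (2:ℝ) ≤ (r * x) ^ β * x ^ β' := by
    have e1 : (r * x) ^ β = r ^ β * x ^ β := mul_rpow hr0.le hx0.le
    have e2 : r ≤ r ^ β := by
      calc r = r ^ (1:ℝ) := (rpow_one r).symm
      _ ≤ r ^ β := rpow_le_rpow_of_exponent_le hr hβ.le
    have e3 : x ^ (2:ℝ) ≤ x ^ β * x ^ β' := by
      rw [← rpow_add hx0]
      exact rpow_le_rpow_of_exponent_le hx (by linarith)
    calc r * x ^ (2:ℝ) ≤ r ^ β * (x ^ β * x ^ β') := by
          apply mul_le_mul e2 e3 (by positivity) (by positivity)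
      _ = (r * x) ^ β * x ^ β' := by rw [e1]; ring
  have h2 : 0 ≤ (r * x) ^ β := rpow_nonneg (by positivity) _
  have h3 : 0 ≤ x ^ β' := rpow_nonneg hx0.le _
  have h4 : r * x ^ (2:ℝ) ≤ (1 + (r * x) ^ β) * (1 + x ^ β') := by nlinarith
  have h5 : (0:ℝ) < r * x ^ (2:ℝ) := by positivity
  calc 1 / ((1 + (r * x) ^ β) * (1 + x ^ β')) ≤ 1 / (r * x ^ (2:ℝ)) :=
        one_div_le_one_div_of_le h5 h4
    _ = r⁻¹ * x ^ (-2 : ℝ) := by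
        rw [rpow_neg hx0.le]
        field_simp

lemma Istmt6_f_int_Ioc (β β' r : ℝ) (hr : 0 < r) {a b : ℝ} (ha : 0 ≤ a) :
    IntegrableOn (fun x : ℝ => 1 / ((1 + (r * x) ^ β) * (1 + x ^ β'))) (Ioc a b) := by
  apply Measure.integrableOn_of_bounded (M := 1) measure_Ioc_lt_top.ne
    (Istmt6_f_meas β β' r).aestronglyMeasurable
  filter_upwards [ae_restrict_mem measurableSet_Ioc] with x hx
  have hx0 : 0 < x := lt_of_le_of_lt ha hx.1
  rw [Real.norm_eq_abs, abs_of_nonneg (Istmt6_f_nonneg β β' r hr hx0)]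
  exact Istmt6_f_le_one β β' r hr hx0

lemma Istmt6_f_int_Ioi1 (β β' r : ℝ) (hβ : 1 < β) (hββ' : β ≤ β') (hr : 1 ≤ r) :
    IntegrableOn (fun x : ℝ => 1 / ((1 + (r * x) ^ β) * (1 + x ^ β'))) (Ioi 1) := by
  have hr0 : (0:ℝ) < r := lt_of_lt_of_le one_pos hr
  apply Integrable.mono'
    ((integrableOn_Ioi_rpow_of_lt (a := (-2:ℝ)) (by norm_num) one_pos).const_mul r⁻¹)
    ((Istmt6_f_meas β β' r).aestronglyMeasurable)
  filter_upwards [ae_restrict_mem measurableSet_Ioi] with x hx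
  have hx1 : (1:ℝ) ≤ x := le_of_lt hx
  rw [Real.norm_eq_abs, abs_of_nonneg (Istmt6_f_nonneg β β' r hr0 (by linarith))]
  exact Istmt6_f_tail β β' r hβ hββ' hr hx1

lemma Istmt6_middle_pointwise (β β' r : ℝ) (hβ : 1 < β) (hββ' : β ≤ β') (hr : 1 ≤ r)
    {x : ℝ} (hx1 : 1/r ≤ x) (hx2 : x ≤ 1) :
    1/(r*x) - 1/((1 + (r*x)^β) * (1 + x^β')) ≤
      (β-1) * Real.log (r*x) / (r*x) + 1/(r*x)^2 + 1/r ∧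
    1/((1 + (r*x)^β) * (1 + x^β')) ≤ 1/(r*x) := by
  have hr0 : (0:ℝ) < r := lt_of_lt_of_le one_pos hr
  have hx0 : (0:ℝ) < x := lt_of_lt_of_le (by positivity) hx1
  set t := r * x with htdef
  have ht : 1 ≤ t := by
    have := (div_le_iff₀ hr0).mp hx1
    rw [htdef]; nlinarith
  have ht0 : (0:ℝ) < t := by linarith
  have htA : t ≤ t ^ β := by
    calc t = t ^ (1:ℝ) := (rpow_one t).symm
    _ ≤ t ^ β := rpow_le_rpow_of_exponent_le ht hβ.le
  have hA0 : (0:ℝ) < t ^ β := by linarith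
  have hS0 : (0:ℝ) ≤ x ^ β' := rpow_nonneg hx0.le _
  have hrS : r * x ^ β' ≤ t ^ β := by
    have h1 : x ^ β' ≤ x ^ β := rpow_le_rpow_of_exponent_ge hx0 hx2 hββ'
    have h2 : r ≤ r ^ β := by
      calc r = r ^ (1:ℝ) := (rpow_one r).symm
      _ ≤ r ^ β := rpow_le_rpow_of_exponent_le hr hβ.le
    have h3 : t ^ β = r ^ β * x ^ β := mul_rpow hr0.le hx0.le
    have h4 : (0:ℝ) ≤ x ^ β := rpow_nonneg hx0.le _
    rw [h3]; nlinarith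
  set A := t ^ β with hAdef
  set S := x ^ β' with hSdef
  have hA1 : 1/t - 1/A ≤ (β-1) * Real.log t / t := by
    have hlog : 0 ≤ Real.log t := Real.log_nonneg ht
    have hexp : t ^ (1-β) = Real.exp (-((β-1) * Real.log t)) := by
      rw [rpow_def_of_pos ht0]; congr 1; ring
    have h5 : 1 - t ^ (1-β) ≤ (β-1) * Real.log t := by
      have := Real.add_one_le_exp (-((β-1) * Real.log t))
      rw [hexp]; linarith
    have h6 : t ^ (1-β) * A = t := by
      rw [hAdef, ← rpow_add ht0]; norm_num
    have h6' : t / A = t ^ (1-β) := by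
      rw [div_eq_iff (ne_of_gt hA0), h6]
    have h7 : 1/t - 1/A = (1 - t/A) / t := by
      field_simp
    rw [h7, h6', div_le_div_iff₀ ht0 ht0]
    nlinarith
  have hB1 : 1/A - 1/(1+A) ≤ 1/(r*x)^2 := by
    have e : 1/A - 1/(1+A) = 1/(A*(1+A)) := by field_simp; ring
    rw [e]
    have h8 : t^2 ≤ A*(1+A) := by nlinarith
    exact one_div_le_one_div_of_le (by positivity) h8
  have hC1 : 1/(1+A) - 1/((1+A)*(1+S)) ≤ 1/r := by
    have e : 1/(1+A) - 1/((1+A)*(1+S)) = S/((1+A)*(1+S)) := by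
      field_simp
      ring
    rw [e]
    have h9 : S * r ≤ (1+A)*(1+S) := by nlinarith
    rw [div_le_div_iff₀ (by nlinarith) hr0]
    nlinarith
  constructor
  · have : 1/t - 1/((1+A)*(1+S)) =
        (1/t - 1/A) + (1/A - 1/(1+A)) + (1/(1+A) - 1/((1+A)*(1+S))) := by ring
    linarith [hA1, hB1, hC1, this]
  · apply one_div_le_one_div_of_le ht0
    nlinarith

lemma Istmt6_int_inv (r : ℝ) (hr : 1 ≤ r) :
    ∫ x in (1/r)..1, 1/(r*x) = Real.log r / r := by
  have hr0 : (0:ℝ) < r := lt_of_lt_of_le one_pos hr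
  have : ∀ x : ℝ, 1/(r*x) = r⁻¹ * x⁻¹ := fun x => by rw [one_div, mul_inv]
  simp_rw [this]
  rw [intervalIntegral.integral_const_mul, integral_inv_of_pos (by positivity) one_pos]
  rw [one_div, one_div, inv_inv, div_eq_inv_mul]

lemma Istmt6_g_int (β r : ℝ) (hr : 1 ≤ r) :
    IntervalIntegrable
      (fun x => (β-1) * Real.log (r*x) / (r*x) + 1/(r*x)^2 + 1/r) volume (1/r) 1 := by
  have hr0 : (0:ℝ) < r := lt_of_lt_of_le one_pos hr
  have hle : 1/r ≤ 1 := by rw [div_le_one hr0]; exact hr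
  apply ContinuousOn.intervalIntegrable
  rw [uIcc_of_le hle]
  have hne : ∀ x ∈ Icc (1/r) 1, r * x ≠ 0 := by
    intro x hx
    have hx0 : (0:ℝ) < x := lt_of_lt_of_le (by positivity) hx.1
    positivity
  have hc1 : ContinuousOn (fun x : ℝ => r * x) (Icc (1/r) 1) :=
    (continuous_const.mul continuous_id).continuousOn
  apply ContinuousOn.add
  apply ContinuousOn.add
  · exact (continuousOn_const.mul (hc1.log hne)).div hc1 hne
  · exact continuousOn_const.div (hc1.pow 2) (fun x hx => pow_ne_zero 2 (hne x hx))
  · exact continuousOn_const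

lemma Istmt6_int_g (β r : ℝ) (hr : 1 ≤ r) :
    ∫ x in (1/r)..1, ((β-1) * Real.log (r*x) / (r*x) + 1/(r*x)^2 + 1/r)
      = (β-1) * Real.log r ^ 2 / (2*r) + (2/r - 2/r^2) := by
  have hr0 : (0:ℝ) < r := lt_of_lt_of_le one_pos hr
  have hle : 1/r ≤ 1 := by rw [div_le_one hr0]; exact hr
  have huIcc : uIcc (1/r) 1 = Icc (1/r) 1 := uIcc_of_le hle
  set G : ℝ → ℝ := fun x => (β-1) * Real.log (r*x) ^ 2 / (2*r) - 1/(r^2*x) + x/r with hG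
  have hderiv : ∀ x ∈ uIcc (1/r) 1,
      HasDerivAt G ((β-1) * Real.log (r*x) / (r*x) + 1/(r*x)^2 + 1/r) x := by
    intro x hx
    rw [huIcc] at hx
    have hx0 : (0:ℝ) < x := lt_of_lt_of_le (by positivity) hx.1
    have hrx : r * x ≠ 0 := by positivity
    have h1 : HasDerivAt (fun x : ℝ => r * x) r x := by
      simpa using (hasDerivAt_id x).const_mul r
    have h2 : HasDerivAt (fun x : ℝ => Real.log (r*x)) (r/(r*x)) x := h1.log hrx
    have h3 : HasDerivAt (fun x : ℝ => Real.log (r*x) ^ 2)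
        (2 * Real.log (r*x) ^ 1 * (r/(r*x))) x := h2.pow 2
    have h4 : HasDerivAt (fun x : ℝ => (β-1) * Real.log (r*x) ^ 2 / (2*r))
        ((2 * Real.log (r*x) ^ 1 * (r/(r*x))) * (β-1) / (2*r)) x := by
      have := (h3.const_mul (β-1)).div_const (2*r)
      exact this.congr_deriv (by ring)
    have h5 : HasDerivAt (fun x : ℝ => r^2 * x) (r^2) x := by
      simpa using (hasDerivAt_id x).const_mul (r^2)
    have h6 : HasDerivAt (fun x : ℝ => 1/(r^2*x)) (-(r^2)/(r^2*x)^2) x := by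
      simpa [one_div, Pi.inv_def] using h5.inv (by positivity)
    have h7 : HasDerivAt (fun x : ℝ => x/r) (1/r) x := by
      simpa using (hasDerivAt_id x).div_const r
    have := (h4.sub h6).add h7
    exact this.congr_deriv (by field_simp; ring)
  rw [intervalIntegral.integral_eq_sub_of_hasDerivAt hderiv (Istmt6_g_int β r hr)]
  rw [hG]
  simp only
  rw [mul_one, mul_one_div, div_self hr0.ne', Real.log_one]
  field_simp
  ring

lemma Istmt6_middle_est (β β' r : ℝ) (hβ : 1 < β) (hββ' : β ≤ β') (hr : 1 ≤ r) :
    |(∫ x in Ioc (1/r) 1, 1 / ((1 + (r * x) ^ β) * (1 + x ^ β'))) - Real.log r / r|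
      ≤ (β-1) * Real.log r ^ 2 / (2*r) + (2/r - 2/r^2) := by
  have hr0 : (0:ℝ) < r := lt_of_lt_of_le one_pos hr
  have hle : 1/r ≤ 1 := by rw [div_le_one hr0]; exact hr
  have hsub : Icc (1/r) 1 ⊆ Ioi (0:ℝ) := fun x hx =>
    lt_of_lt_of_le (by positivity) hx.1
  have hf_int : IntervalIntegrable
      (fun x : ℝ => 1 / ((1 + (r * x) ^ β) * (1 + x ^ β'))) volume (1/r) 1 := by
    apply ContinuousOn.intervalIntegrable
    rw [uIcc_of_le hle]
    exact (Istmt6_f_contOn β β' r (by linarith) (by linarith) hr0).mono hsub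
  have hinv_int : IntervalIntegrable (fun x : ℝ => 1/(r*x)) volume (1/r) 1 := by
    apply ContinuousOn.intervalIntegrable
    rw [uIcc_of_le hle]
    apply continuousOn_const.div ((continuous_const.mul continuous_id).continuousOn)
    intro x hx
    have hx0 : (0:ℝ) < x := lt_of_lt_of_le (by positivity) hx.1
    show r * x ≠ 0
    positivity
  have hmono1 : (∫ x in (1/r)..1, 1 / ((1 + (r * x) ^ β) * (1 + x ^ β')))
      ≤ ∫ x in (1/r)..1, 1/(r*x) := by
    apply intervalIntegral.integral_mono_on hle hf_int hinv_int
    intro x hx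
    exact (Istmt6_middle_pointwise β β' r hβ hββ' hr hx.1 hx.2).2
  have hmono2 : (∫ x in (1/r)..1, 1/(r*x))
        - (∫ x in (1/r)..1, 1 / ((1 + (r * x) ^ β) * (1 + x ^ β')))
      ≤ (β-1) * Real.log r ^ 2 / (2*r) + (2/r - 2/r^2) := by
    rw [← intervalIntegral.integral_sub hinv_int hf_int, ← Istmt6_int_g β r hr]
    apply intervalIntegral.integral_mono_on hle (hinv_int.sub hf_int) (Istmt6_g_int β r hr)
    intro x hx
    exact (Istmt6_middle_pointwise β β' r hβ hββ' hr hx.1 hx.2).1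
  rw [← intervalIntegral.integral_of_le hle, ← Istmt6_int_inv r hr]
  rw [abs_sub_comm, abs_of_nonneg (by linarith)]
  linarith

end Aux

/-- for `β' ≥ β > 1`, `I(r) = ∫_0^∞ dx/((1+(rx)^β)(1+x^{β'}))`
satisfies, for every `r ≥ 1`,
`|I(r) - (log r)/r| ≤ 4/r + (β-1)(log r)²/(2r)`. -/
theorem integral_estimate_r_ge_one
    (β β' : ℝ) (hβ : 1 < β) (hββ' : β ≤ β') (r : ℝ) (hr : 1 ≤ r) :
    |(∫ x in Ioi (0 : ℝ), 1 / ((1 + (r * x) ^ β) * (1 + x ^ β')))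
        - Real.log r / r|
      ≤ 4 / r + (β - 1) * (Real.log r) ^ 2 / (2 * r) := by
  have hr0 : (0:ℝ) < r := lt_of_lt_of_le one_pos hr
  have hle : 1/r ≤ 1 := by rw [div_le_one hr0]; exact hr
  have h0le : (0:ℝ) ≤ 1/r := by positivity
  have i1 : IntegrableOn (fun x : ℝ => 1 / ((1 + (r * x) ^ β) * (1 + x ^ β')))
      (Ioc 0 (1/r)) := Istmt6_f_int_Ioc β β' r hr0 le_rfl
  have i2 : IntegrableOn (fun x : ℝ => 1 / ((1 + (r * x) ^ β) * (1 + x ^ β')))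
      (Ioc (1/r) 1) := Istmt6_f_int_Ioc β β' r hr0 h0le
  have i3 : IntegrableOn (fun x : ℝ => 1 / ((1 + (r * x) ^ β) * (1 + x ^ β')))
      (Ioi 1) := Istmt6_f_int_Ioi1 β β' r hβ hββ' hr
  have e1 : Ioi (0:ℝ) = (Ioc 0 (1/r) ∪ Ioc (1/r) 1) ∪ Ioi 1 := by
    rw [Ioc_union_Ioc_eq_Ioc h0le hle, Ioc_union_Ioi_eq_Ioi zero_le_one]
  have hsplit : (∫ x in Ioi (0:ℝ), 1 / ((1 + (r * x) ^ β) * (1 + x ^ β')))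
      = (∫ x in Ioc 0 (1/r), 1 / ((1 + (r * x) ^ β) * (1 + x ^ β')))
      + (∫ x in Ioc (1/r) 1, 1 / ((1 + (r * x) ^ β) * (1 + x ^ β')))
      + (∫ x in Ioi 1, 1 / ((1 + (r * x) ^ β) * (1 + x ^ β'))) := by
    rw [e1, setIntegral_union ((Ioc_disjoint_Ioi hle).union_left Ioc_disjoint_Ioi_same)
        measurableSet_Ioi (i1.union i2) i3,
      setIntegral_union (Ioc_disjoint_Ioc_of_le le_rfl) measurableSet_Ioc i1 i2]
  -- T1
  have hT1l : 0 ≤ ∫ x in Ioc (0:ℝ) (1/r), 1 / ((1 + (r * x) ^ β) * (1 + x ^ β')) :=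
    setIntegral_nonneg measurableSet_Ioc fun x hx => Istmt6_f_nonneg β β' r hr0 hx.1
  have hT1u : (∫ x in Ioc (0:ℝ) (1/r), 1 / ((1 + (r * x) ^ β) * (1 + x ^ β'))) ≤ 1/r := by
    have hb := norm_setIntegral_le_of_norm_le_const (μ := volume) (s := Ioc (0:ℝ) (1/r))
      (C := 1) measure_Ioc_lt_top
      (fun x hx => by
        rw [Real.norm_eq_abs, abs_of_nonneg (Istmt6_f_nonneg β β' r hr0 hx.1)]
        exact Istmt6_f_le_one β β' r hr0 hx.1)
    have := le_trans (le_abs_self _) hb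
    rwa [Real.volume_real_Ioc, sub_zero, max_eq_left h0le, one_mul] at this
  -- T2
  have hT2l : 0 ≤ ∫ x in Ioi (1:ℝ), 1 / ((1 + (r * x) ^ β) * (1 + x ^ β')) :=
    setIntegral_nonneg measurableSet_Ioi fun x hx =>
      Istmt6_f_nonneg β β' r hr0 (lt_trans one_pos hx)
  have hT2u : (∫ x in Ioi (1:ℝ), 1 / ((1 + (r * x) ^ β) * (1 + x ^ β'))) ≤ 1/r := by
    calc (∫ x in Ioi (1:ℝ), 1 / ((1 + (r * x) ^ β) * (1 + x ^ β')))
        ≤ ∫ x in Ioi (1:ℝ), r⁻¹ * x ^ (-2:ℝ) := by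
          apply setIntegral_mono_on i3
            ((integrableOn_Ioi_rpow_of_lt (a := (-2:ℝ)) (by norm_num) one_pos).const_mul r⁻¹)
            measurableSet_Ioi
          intro x hx
          exact Istmt6_f_tail β β' r hβ hββ' hr hx.le
      _ = r⁻¹ * ∫ x in Ioi (1:ℝ), x ^ (-2:ℝ) := by rw [integral_const_mul]
      _ = 1/r := by
          rw [integral_Ioi_rpow_of_lt (by norm_num) one_pos]
          norm_num
  -- Middle
  have hM := abs_le.mp (Istmt6_middle_est β β' r hβ hββ' hr)
  have h2r2 : (0:ℝ) ≤ 2/r^2 := by positivity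
  have e2 : 2/r = 2*(1/r) := by ring
  have e4 : 4/r = 4*(1/r) := by ring
  rw [hsplit, abs_le]
  constructor
  · linarith [hM.1, hM.2, hT1l, hT1u, hT2l, hT2u]
  · linarith [hM.1, hM.2, hT1l, hT1u, hT2l, hT2u]
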